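/- arXiv:2109.04855 — 2 statements merged into one kernel-verified Lean document; each statement's English description precedes it below -/
import Mathlib

section
/- If M = {S₁,...,S_ν} consists of pairwise disjoint nonempty subsets of [n], then every maximal face of Σ(M) has exactly n − ν elements. -/
/-- If `M = {S₁, ..., S_ν}` consists of pairwise disjoint nonempty subsets of
`[n]`, then every maximal face of `Σ(M) = {σ : ∀ i, ¬ S i ⊆ σ}` has exactly
`n - ν` elements. -/
theorem stmt5 (n ν : ℕ) (S : Fin ν → Finset (Fin n))
    (hdisj : Pairwise (fun i j => Disjoint (S i) (S j)))
    (hinj : Function.Injective S)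
    (hne : ∀ i, (S i).Nonempty) (σ : Finset (Fin n))
    (hmax : Maximal (fun σ : Finset (Fin n) => ∀ i, ¬ S i ⊆ σ) σ) :
    σ.card = n - ν := by
  classical
  have h1 : ∀ x ∈ σᶜ, ∃ i, x ∈ S i ∧ S i ⊆ insert x σ := by
    intro x hx
    by_contra h
    push_neg at h
    have hall : ∀ i, ¬ S i ⊆ insert x σ := by
      intro i hi
      by_cases hxi : x ∈ S i
      · exact h i hxi hi
      · exact hmax.1 i (fun y hy => by
          rcases Finset.mem_insert.1 (hi hy) with rfl | hy'
          · exact absurd hy hxi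
          · exact hy')
    have := hmax.2 hall (Finset.subset_insert x σ)
    exact (Finset.mem_compl.1 hx) (this (Finset.mem_insert_self x σ))
  choose f hf1 hf2 using h1
  have hcard : σᶜ.card = ν := by
    rw [← Fintype.card_fin ν, ← Finset.card_univ]
    apply Finset.card_bij f
    · intro a ha; exact Finset.mem_univ _
    · intro a1 ha1 a2 ha2 heq
      by_contra hne'
      have h2 : a2 ∈ S (f a1 ha1) := heq ▸ hf1 a2 ha2
      have := hf2 a1 ha1 h2
      rcases Finset.mem_insert.1 this with rfl | h'
      · exact hne' rfl
      · exact (Finset.mem_compl.1 ha2) h'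
    · intro i _
      obtain ⟨x, hxS, hxσ⟩ := Finset.not_subset.1 (hmax.1 i)
      have hx : x ∈ σᶜ := Finset.mem_compl.2 hxσ
      refine ⟨x, hx, ?_⟩
      by_contra hij
      exact (Finset.disjoint_left.1 (hdisj hij)) (hf1 x hx) hxS
  have h3 : σᶜ.card = n - σ.card := by
    rw [Finset.card_compl, Fintype.card_fin]
  have h4 : σ.card ≤ n := le_trans (Finset.card_le_univ σ) (by simp)
  omega
end

section
/- Let k ≥ 2 and d with d + 3 ≥ 2k. If Σ is a simplicial complex on the vertex set [d+3] whose number of (k−1)-dimensional faces (k-element faces) is strictly less than C(d+2, k), then the family F of minimal non-faces of Σ (equivalently, the family of all non-faces) is not intersecting: there exist two disjoint subsets of [d+3] neither of which is a face of Σ. -/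
/-- Topological Erdős–Ko–Rado hypothesis check: if `k ≥ 2`, `d + 3 ≥ 2k`, and
`Σ` is a simplicial complex on `[d+3]` with fewer than `C(d+2, k)` faces of
size `k`, then the family of non-faces of `Σ` is not intersecting: there are
two disjoint non-faces. -/
theorem stmt6 (d k : ℕ) (hk : 2 ≤ k) (hdk : 2 * k ≤ d + 3)
    (K : Finset (Finset (Fin (d + 3))))
    (hdc : ∀ σ ∈ K, ∀ τ ⊆ σ, τ ∈ K)
    (hcount : (Finset.univ.filter (fun σ : Finset (Fin (d + 3)) =>
      σ.card = k ∧ σ ∈ K)).card < Nat.choose (d + 2) k) :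
    ∃ σ τ : Finset (Fin (d + 3)), Disjoint σ τ ∧ σ ∉ K ∧ τ ∉ K := by
  by_contra hcon
  push_neg at hcon
  set 𝒜 := Finset.univ.filter (fun σ : Finset (Fin (d + 3)) => σ.card = k ∧ σ ∉ K) with h𝒜
  have hint : (𝒜 : Set (Finset (Fin (d + 3)))).Intersecting := by
    intro a ha b hb hab
    simp only [h𝒜, Finset.coe_filter, Set.mem_setOf_eq, Finset.mem_univ, true_and] at ha hb
    exact hb.2 (hcon a b hab ha.2)
  have hsized : (𝒜 : Set (Finset (Fin (d + 3)))).Sized k := by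
    intro a ha
    simp only [h𝒜, Finset.coe_filter, Set.mem_setOf_eq, Finset.mem_univ, true_and] at ha
    exact ha.1
  have hekr := Finset.erdos_ko_rado hint hsized (by omega)
  have htot : (Finset.univ.filter (fun σ : Finset (Fin (d + 3)) => σ.card = k)).card
      = (d + 3).choose k := by
    have : Finset.univ.filter (fun σ : Finset (Fin (d + 3)) => σ.card = k)
        = Finset.powersetCard k Finset.univ := by
      ext s
      simp [Finset.mem_powersetCard_univ]
    rw [this, Finset.card_powersetCard, Finset.card_fin]
  have hsplit : (Finset.univ.filter (fun σ : Finset (Fin (d + 3)) => σ.card = k ∧ σ ∈ K)).card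
      + 𝒜.card
      = (Finset.univ.filter (fun σ : Finset (Fin (d + 3)) => σ.card = k)).card := by
    classical
    have h := Finset.card_filter_add_card_filter_not
      (s := Finset.univ.filter (fun σ : Finset (Fin (d + 3)) => σ.card = k))
      (p := fun σ => σ ∈ K)
    simp only [Finset.filter_filter] at h
    rw [h𝒜]
    exact h
  have hpascal : (d + 3).choose k = (d + 2).choose (k - 1) + (d + 2).choose k := by
    obtain ⟨k', rfl⟩ : ∃ k', k = k' + 1 := ⟨k - 1, by omega⟩
    simp [Nat.choose_succ_succ (d + 2) k']
  have hekr' : 𝒜.card ≤ (d + 2).choose (k - 1) := by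
    simpa using hekr
  omega
end
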